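/- For every N ≥ 2, the recursively defined thresholds a_{N,1}, a_{N,2}, ..., a_{N,N-1} are real numbers lying in the interval [x_1, x_k] and are strictly increasing in the second index: a_{N,1} < a_{N,2} < ... < a_{N,N-1}. -/
import Mathlib


open Finset

/-- The recursively defined thresholds `a_{N,r}` of Derman–Lieberman–Ross:
`a_{N,0} = -∞`, `a_{N,N} = +∞` (indeed `a_{N,r} = +∞` for `r ≥ N`), and for
`N ≥ 2`, `1 ≤ r ≤ N-1`,
`a_{N,r} = Σ_{j=1}^k p_j · min(max(x_j, a_{N-1,r-1}), a_{N-1,r})`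
(the conventions `max(x,-∞) = x`, `min(x,+∞) = x` hold automatically in `EReal`). -/
noncomputable def aT (k : ℕ) (x p : ℕ → ℝ) : ℕ → ℕ → EReal
  | 0, _ => ⊥
  | N + 1, r =>
    if r = 0 then ⊥
    else if N + 1 ≤ r then ⊤
    else ∑ j ∈ Finset.Icc 1 k,
      (p j : EReal) * min (max (x j : EReal) (aT k x p N (r - 1))) (aT k x p N r)

lemma aT_zero (k : ℕ) (x p : ℕ → ℝ) (N : ℕ) : aT k x p N 0 = ⊥ := by
  cases N <;> simp [aT]

lemma aT_top (k : ℕ) (x p : ℕ → ℝ) (N r : ℕ) (h : N + 1 ≤ r) : aT k x p (N+1) r = ⊤ := by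
  simp [aT, h]; omega

lemma aT_succ (k : ℕ) (x p : ℕ → ℝ) (N r : ℕ) (h1 : 1 ≤ r) (h2 : r ≤ N) :
    aT k x p (N+1) r = ∑ j ∈ Finset.Icc 1 k,
      (p j : EReal) * min (max (x j : EReal) (aT k x p N (r - 1))) (aT k x p N r) := by
  rw [aT]; simp only [if_neg (by omega : ¬ r = 0), if_neg (by omega : ¬ N + 1 ≤ r)]

lemma ereal_coe_sum (s : Finset ℕ) (f : ℕ → ℝ) :
    ((∑ j ∈ s, f j : ℝ) : EReal) = ∑ j ∈ s, (f j : EReal) := by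
  induction s using Finset.cons_induction with
  | empty => simp
  | cons a s ha ih => simp [Finset.sum_insert ha, ih]

lemma aux_Q (k : ℕ) (hk : 3 ≤ k) (x p : ℕ → ℝ)
    (hx : ∀ i j : ℕ, 1 ≤ i → i < j → j ≤ k → x i < x j)
    (hp : ∀ j : ℕ, 1 ≤ j → j ≤ k → 0 < p j)
    (hsum : ∑ j ∈ Finset.Icc 1 k, p j = 1) :
    ∀ N : ℕ, 1 ≤ N →
      (∀ r s : ℕ, r < s → s ≤ N → aT k x p N r < aT k x p N s) ∧
      (∀ r : ℕ, 1 ≤ r → r ≤ N → (x 1 : EReal) ≤ aT k x p N r) ∧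
      (∀ r : ℕ, r ≤ N - 1 → aT k x p N r ≤ (x k : EReal)) := by
  have hx1 : ∀ j : ℕ, 1 ≤ j → j ≤ k → x 1 ≤ x j := by
    intro j h1 h2
    rcases eq_or_lt_of_le h1 with h | h
    · exact h ▸ le_rfl
    · exact (hx 1 j le_rfl h h2).le
  have hxk : ∀ j : ℕ, 1 ≤ j → j ≤ k → x j ≤ x k := by
    intro j h1 h2
    rcases eq_or_lt_of_le h2 with h | h
    · exact h ▸ le_rfl
    · exact (hx j k h1 h (le_refl k)).le
  intro N hN1
  induction N, hN1 using Nat.le_induction with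
  | base =>
    refine ⟨?_, ?_, ?_⟩
    · intro r s hrs hs
      have hr0 : r = 0 := by omega
      have hs1 : s = 1 := by omega
      subst hr0; subst hs1
      rw [aT_zero, aT_top k x p 0 1 le_rfl]
      exact bot_lt_top
    · intro r h1 h2
      have : r = 1 := by omega
      subst this
      rw [aT_top k x p 0 1 le_rfl]; exact le_top
    · intro r hr
      have : r = 0 := by omega
      subst this
      rw [aT_zero]; exact bot_le
  | succ N hN IH =>
    obtain ⟨hmono, hlow, hup⟩ := IH
    -- per-term values
    set v : ℕ → ℕ → EReal := fun j t =>
      min (max (x j : EReal) (aT k x p N (t - 1))) (aT k x p N t) with hv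
    have hmono_le : ∀ r s : ℕ, r ≤ s → s ≤ N → aT k x p N r ≤ aT k x p N s := by
      intro r s hrs hs
      rcases eq_or_lt_of_le hrs with h | h
      · exact h ▸ le_rfl
      · exact (hmono r s h hs).le
    have hv_low : ∀ t j : ℕ, 1 ≤ t → t ≤ N → 1 ≤ j → j ≤ k →
        (x 1 : EReal) ≤ v j t := by
      intro t j ht1 ht2 hj1 hj2
      refine le_min (le_max_of_le_left ?_) (hlow t ht1 ht2)
      exact EReal.coe_le_coe_iff.mpr (hx1 j hj1 hj2)
    have hv_up : ∀ t j : ℕ, 1 ≤ t → t ≤ N → 1 ≤ j → j ≤ k →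
        v j t ≤ (x k : EReal) := by
      intro t j ht1 ht2 hj1 hj2
      refine min_le_of_left_le (max_le ?_ (hup (t-1) (by omega)))
      exact EReal.coe_le_coe_iff.mpr (hxk j hj1 hj2)
    -- real values
    set u : ℕ → ℕ → ℝ := fun j t => (v j t).toReal with hu
    have hcoe : ∀ t j : ℕ, 1 ≤ t → t ≤ N → 1 ≤ j → j ≤ k →
        ((u j t : ℝ) : EReal) = v j t := by
      intro t j ht1 ht2 hj1 hj2
      refine EReal.coe_toReal ?_ ?_
      · exact ne_top_of_le_ne_top (EReal.coe_ne_top _) (hv_up t j ht1 ht2 hj1 hj2)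
      · exact fun h => (EReal.coe_ne_bot (x 1)) (le_bot_iff.mp (h ▸ hv_low t j ht1 ht2 hj1 hj2))
    have hsum_eq : ∀ t : ℕ, 1 ≤ t → t ≤ N →
        aT k x p (N+1) t = ((∑ j ∈ Finset.Icc 1 k, p j * u j t : ℝ) : EReal) := by
      intro t ht1 ht2
      rw [aT_succ k x p N t ht1 ht2, ereal_coe_sum]
      refine Finset.sum_congr rfl ?_
      intro j hj
      rw [Finset.mem_Icc] at hj
      rw [EReal.coe_mul, hcoe t j ht1 ht2 hj.1 hj.2]
    have hu_low : ∀ t j : ℕ, 1 ≤ t → t ≤ N → 1 ≤ j → j ≤ k → x 1 ≤ u j t := by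
      intro t j ht1 ht2 hj1 hj2
      exact EReal.coe_le_coe_iff.mp ((hcoe t j ht1 ht2 hj1 hj2).symm ▸ hv_low t j ht1 ht2 hj1 hj2)
    have hu_up : ∀ t j : ℕ, 1 ≤ t → t ≤ N → 1 ≤ j → j ≤ k → u j t ≤ x k := by
      intro t j ht1 ht2 hj1 hj2
      exact EReal.coe_le_coe_iff.mp ((hcoe t j ht1 ht2 hj1 hj2).symm ▸ hv_up t j ht1 ht2 hj1 hj2)
    -- bounds on the sums
    have hS_low : ∀ t : ℕ, 1 ≤ t → t ≤ N →
        x 1 ≤ ∑ j ∈ Finset.Icc 1 k, p j * u j t := by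
      intro t ht1 ht2
      have : ∑ j ∈ Finset.Icc 1 k, p j * x 1 ≤ ∑ j ∈ Finset.Icc 1 k, p j * u j t := by
        refine Finset.sum_le_sum ?_
        intro j hj
        rw [Finset.mem_Icc] at hj
        exact mul_le_mul_of_nonneg_left (hu_low t j ht1 ht2 hj.1 hj.2) (hp j hj.1 hj.2).le
      calc x 1 = (∑ j ∈ Finset.Icc 1 k, p j) * x 1 := by rw [hsum, one_mul]
        _ = ∑ j ∈ Finset.Icc 1 k, p j * x 1 := Finset.sum_mul _ _ _
        _ ≤ _ := this
    have hS_up : ∀ t : ℕ, 1 ≤ t → t ≤ N →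
        (∑ j ∈ Finset.Icc 1 k, p j * u j t) ≤ x k := by
      intro t ht1 ht2
      have : ∑ j ∈ Finset.Icc 1 k, p j * u j t ≤ ∑ j ∈ Finset.Icc 1 k, p j * x k := by
        refine Finset.sum_le_sum ?_
        intro j hj
        rw [Finset.mem_Icc] at hj
        exact mul_le_mul_of_nonneg_left (hu_up t j ht1 ht2 hj.1 hj.2) (hp j hj.1 hj.2).le
      calc ∑ j ∈ Finset.Icc 1 k, p j * u j t ≤ ∑ j ∈ Finset.Icc 1 k, p j * x k := this
        _ = (∑ j ∈ Finset.Icc 1 k, p j) * x k := (Finset.sum_mul _ _ _).symm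
        _ = x k := by rw [hsum, one_mul]
    -- strict monotonicity of the sums
    have hS_mono : ∀ r s : ℕ, 1 ≤ r → r < s → s ≤ N →
        (∑ j ∈ Finset.Icc 1 k, p j * u j r) < ∑ j ∈ Finset.Icc 1 k, p j * u j s := by
      intro r s hr1 hrs hs
      have hr2 : r ≤ N := by omega
      have hs1 : 1 ≤ s := by omega
      have hv_mono : ∀ j : ℕ, v j r ≤ v j s := by
        intro j
        exact min_le_min (max_le_max le_rfl (hmono_le (r-1) (s-1) (by omega) (by omega)))
          (hmono_le r s hrs.le hs)
      -- c ≤ b' :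
      have hcb' : aT k x p N r ≤ aT k x p N (s - 1) := hmono_le r (s-1) (by omega) (by omega)
      have hcc' : aT k x p N r < aT k x p N s := hmono r s hrs hs
      have hbb' : aT k x p N (r-1) < aT k x p N (s-1) := hmono (r-1) (s-1) (by omega) (by omega)
      have hx1k : (x 1 : EReal) < (x k : EReal) :=
        EReal.coe_lt_coe_iff.mpr (hx 1 k le_rfl (by omega) le_rfl)
      -- witness
      have hwit : ∃ j0 : ℕ, 1 ≤ j0 ∧ j0 ≤ k ∧ v j0 r < v j0 s := by
        rcases le_or_gt (aT k x p N r) (max (x 1 : EReal) (aT k x p N (r-1))) with hB | hA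
        · rcases le_max_iff.mp hB with h1 | h2
          · refine ⟨k, by omega, le_rfl, ?_⟩
            refine lt_of_le_of_lt (min_le_right _ _) (lt_min ?_ ?_)
            · exact lt_of_le_of_lt h1 (lt_of_lt_of_le hx1k (le_max_left _ _))
            · exact hcc'
          · refine ⟨1, le_rfl, by omega, ?_⟩
            refine lt_of_le_of_lt (min_le_right _ _) (lt_min ?_ ?_)
            · exact lt_of_le_of_lt h2 (lt_of_lt_of_le hbb' (le_max_right _ _))
            · exact hcc'
        · refine ⟨1, le_rfl, by omega, ?_⟩
          refine lt_of_le_of_lt (min_le_left _ _) (lt_min ?_ ?_)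
          · exact lt_of_lt_of_le hA (le_trans hcb' (le_max_right _ _))
          · exact hA.trans hcc'
      obtain ⟨j0, hj01, hj0k, hj0⟩ := hwit
      refine Finset.sum_lt_sum ?_ ⟨j0, Finset.mem_Icc.mpr ⟨hj01, hj0k⟩, ?_⟩
      · intro j hj
        rw [Finset.mem_Icc] at hj
        have : u j r ≤ u j s := by
          refine EReal.coe_le_coe_iff.mp ?_
          rw [hcoe r j hr1 hr2 hj.1 hj.2, hcoe s j hs1 hs hj.1 hj.2]
          exact hv_mono j
        exact mul_le_mul_of_nonneg_left this (hp j hj.1 hj.2).le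
      · have : u j0 r < u j0 s := by
          refine EReal.coe_lt_coe_iff.mp ?_
          rw [hcoe r j0 hr1 hr2 hj01 hj0k, hcoe s j0 hs1 hs hj01 hj0k]
          exact hj0
        exact mul_lt_mul_of_pos_left this (hp j0 hj01 hj0k)
    refine ⟨?_, ?_, ?_⟩
    · -- strict mono for N+1
      intro r s hrs hs
      rcases Nat.eq_zero_or_pos r with hr0 | hr1
      · subst hr0
        rw [aT_zero]
        rcases eq_or_lt_of_le hs with hsN | hsN
        · rw [aT_top k x p N s (le_of_eq hsN.symm)]; exact bot_lt_top
        · rw [hsum_eq s (by omega) (by omega)]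
          exact EReal.bot_lt_coe _
      · rcases eq_or_lt_of_le hs with hsN | hsN
        · rw [aT_top k x p N s (le_of_eq hsN.symm), hsum_eq r hr1 (by omega)]
          exact EReal.coe_lt_top _
        · rw [hsum_eq r hr1 (by omega), hsum_eq s (by omega) (by omega)]
          exact EReal.coe_lt_coe_iff.mpr (hS_mono r s hr1 hrs (by omega))
    · intro r h1 h2
      rcases eq_or_lt_of_le h2 with hrN | hrN
      · rw [aT_top k x p N r (le_of_eq hrN.symm)]; exact le_top
      · rw [hsum_eq r h1 (by omega)]
        exact EReal.coe_le_coe_iff.mpr (hS_low r h1 (by omega))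
    · intro r hr
      have hr' : r ≤ N := by omega
      rcases Nat.eq_zero_or_pos r with hr0 | hr1
      · subst hr0; rw [aT_zero]; exact bot_le
      · rw [hsum_eq r hr1 hr']
        exact EReal.coe_le_coe_iff.mpr (hS_up r hr1 hr')

/-- For every `N ≥ 2`, the thresholds `a_{N,1}, …, a_{N,N-1}` are
real numbers lying in `[x_1, x_k]` and are strictly increasing in the second
index. -/
theorem thresholds_strict_mono (k : ℕ) (hk : 3 ≤ k) (x p : ℕ → ℝ)
    (hx : ∀ i j : ℕ, 1 ≤ i → i < j → j ≤ k → x i < x j)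
    (hp : ∀ j : ℕ, 1 ≤ j → j ≤ k → 0 < p j)
    (hsum : ∑ j ∈ Finset.Icc 1 k, p j = 1) :
    ∀ N : ℕ, 2 ≤ N →
      (∀ r : ℕ, 1 ≤ r → r ≤ N - 1 →
        (x 1 : EReal) ≤ aT k x p N r ∧ aT k x p N r ≤ (x k : EReal)) ∧
      (∀ r s : ℕ, 1 ≤ r → r < s → s ≤ N - 1 → aT k x p N r < aT k x p N s) := by
  intro N hN
  obtain ⟨hmono, hlow, hup⟩ := aux_Q k hk x p hx hp hsum N (by omega)
  refine ⟨fun r h1 h2 => ⟨hlow r h1 (by omega), hup r h2⟩, fun r s h1 h2 h3 => hmono r s h2 (by omega)⟩
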